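/- If an n×n communication matrix C has a quantum implementation C_{ab} = tr(ρ_a M(b)) with density matrices ρ_a and POVM M on ℂ^d, tr(C) = d, and every column of C is nonzero, then every M(b) has rank 1. -/

import Mathlib

open Matrix BigOperators
open scoped ComplexOrder

/-- A quantum (dimension-d) implementation of a communication matrix `C`:
states `ρ` are density matrices, `M` is a POVM, and `C a b = tr(ρ_a M(b))`. -/
def QImpl {d n m : ℕ} (C : Matrix (Fin n) (Fin m) ℝ)
    (ρ : Fin n → Matrix (Fin d) (Fin d) ℂ) (M : Fin m → Matrix (Fin d) (Fin d) ℂ) : Prop :=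
  (∀ a, (ρ a).PosSemidef) ∧ (∀ a, (ρ a).trace = 1) ∧
  (∀ b, (M b).PosSemidef) ∧ (∑ b, M b) = 1 ∧
  ∀ a b, (C a b : ℂ) = (ρ a * M b).trace

section Helpers

variable {d : ℕ}

lemma trace_ctms_nonneg {m p : Type*} [Fintype m] [Fintype p] (X : Matrix m p ℂ) :
    0 ≤ (Xᴴ * X).trace := by
  rw [Matrix.trace]
  refine Finset.sum_nonneg fun j _ => ?_
  simp only [Matrix.diag_apply, Matrix.mul_apply, Matrix.conjTranspose_apply]
  exact Finset.sum_nonneg fun i _ => star_mul_self_nonneg _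

lemma ctms_eq_zero {m p : Type*} [Fintype m] [Fintype p] (X : Matrix m p ℂ)
    (h : (Xᴴ * X).trace = 0) : X = 0 := by
  rw [Matrix.trace] at h
  have hdiag : ∀ j ∈ Finset.univ, (0:ℂ) ≤ (Xᴴ * X).diag j := fun j _ => by
    simp only [Matrix.diag_apply, Matrix.mul_apply, Matrix.conjTranspose_apply]
    exact Finset.sum_nonneg fun i _ => star_mul_self_nonneg _
  have hz := (Finset.sum_eq_zero_iff_of_nonneg hdiag).mp h
  ext i j
  have hzj := hz j (Finset.mem_univ j)
  simp only [Matrix.diag_apply, Matrix.mul_apply, Matrix.conjTranspose_apply] at hzj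
  have hterm : ∀ i ∈ Finset.univ, (0:ℂ) ≤ star (X i j) * X i j :=
    fun i _ => star_mul_self_nonneg _
  have := (Finset.sum_eq_zero_iff_of_nonneg hterm).mp hzj i (Finset.mem_univ i)
  rcases mul_eq_zero.mp this with h | h
  · simpa using star_eq_zero.mp h
  · simpa using h

open scoped MatrixOrder in
lemma trace_mul_psd_facts {A B : Matrix (Fin d) (Fin d) ℂ}
    (hA : A.PosSemidef) (hB : B.PosSemidef) :
    0 ≤ (A * B).trace ∧ ((A * B).trace = 0 → A * B = 0) := by
  have hA0 : 0 ≤ A := hA.nonneg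
  have hB0 : 0 ≤ B := hB.nonneg
  set X := CFC.sqrt A * CFC.sqrt B with hX
  have hXc : Xᴴ = CFC.sqrt B * CFC.sqrt A := by
    rw [hX, conjTranspose_mul, (CFC.sqrt_nonneg A).posSemidef.isHermitian.eq,
      (CFC.sqrt_nonneg B).posSemidef.isHermitian.eq]
  have key : (Xᴴ * X).trace = (A * B).trace := by
    rw [hXc, hX]
    rw [show CFC.sqrt B * CFC.sqrt A * (CFC.sqrt A * CFC.sqrt B) = CFC.sqrt B * (A * CFC.sqrt B) by
      rw [mul_assoc, ← mul_assoc (CFC.sqrt A), CFC.sqrt_mul_sqrt_self A]]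
    rw [trace_mul_comm, mul_assoc, CFC.sqrt_mul_sqrt_self B]
  constructor
  · rw [← key]; exact trace_ctms_nonneg X
  · intro h0
    have hX0 : X = 0 := ctms_eq_zero X (by rw [key]; exact h0)
    have : A * B = CFC.sqrt A * X * CFC.sqrt B := by
      rw [hX, ← mul_assoc, CFC.sqrt_mul_sqrt_self A, mul_assoc, CFC.sqrt_mul_sqrt_self B]
    rw [this, hX0, mul_zero, zero_mul]

lemma density_eigen_sum {ρ : Matrix (Fin d) (Fin d) ℂ} (hρ : ρ.PosSemidef)
    (htr : ρ.trace = 1) : ∑ i, hρ.1.eigenvalues i = 1 := by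
  classical
  have hUU : (star (hρ.1.eigenvectorUnitary : Matrix (Fin d) (Fin d) ℂ)) *
      (hρ.1.eigenvectorUnitary : Matrix (Fin d) (Fin d) ℂ) = 1 :=
    Matrix.mem_unitaryGroup_iff'.mp hρ.1.eigenvectorUnitary.2
  have h1 : ρ.trace = ∑ i, (hρ.1.eigenvalues i : ℂ) := by
    conv_lhs => rw [hρ.1.spectral_theorem, Unitary.conjStarAlgAut_apply]
    rw [Matrix.trace_mul_cycle, hUU, one_mul, Matrix.trace_diagonal]
    simp [Function.comp]
  rw [htr] at h1
  exact_mod_cast h1.symm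

lemma eig_one_unique {μ : Fin d → ℝ} (hnn : ∀ i, 0 ≤ μ i) (hsum : ∑ i, μ i = 1)
    {i j : Fin d} (hi : μ i = 1) (hj : μ j = 1) : i = j := by
  by_contra hij
  have h2 : μ i + μ j ≤ ∑ k, μ k := by
    have := Finset.sum_le_sum_of_subset_of_nonneg (Finset.subset_univ ({i, j} : Finset (Fin d)))
      (fun k _ _ => hnn k)
    rwa [Finset.sum_pair hij] at this
  rw [hi, hj, hsum] at h2; linarith

lemma one_sub_psd {ρ : Matrix (Fin d) (Fin d) ℂ} (hρ : ρ.PosSemidef)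
    (htr : ρ.trace = 1) : (1 - ρ).PosSemidef := by
  classical
  set U : Matrix (Fin d) (Fin d) ℂ := (hρ.1.eigenvectorUnitary : Matrix (Fin d) (Fin d) ℂ)
    with hUdef
  have hUU' : U * star U = 1 := Matrix.mem_unitaryGroup_iff.mp hρ.1.eigenvectorUnitary.2
  have hsum := density_eigen_sum hρ htr
  have hle : ∀ i, hρ.1.eigenvalues i ≤ 1 := by
    intro i
    calc hρ.1.eigenvalues i ≤ ∑ k, hρ.1.eigenvalues k :=
      Finset.single_le_sum (fun k _ => hρ.eigenvalues_nonneg k) (Finset.mem_univ i)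
    _ = 1 := hsum
  have hdec : 1 - ρ = U * Matrix.diagonal (fun i => (1 : ℂ) - (hρ.1.eigenvalues i : ℂ)) * star U := by
    have h1 : (1 : Matrix (Fin d) (Fin d) ℂ) = U * 1 * star U := by rw [mul_one, hUU']
    conv_lhs => rw [h1, hρ.1.spectral_theorem, Unitary.conjStarAlgAut_apply]
    rw [← sub_mul, ← mul_sub]
    congr 1
    congr 1
    ext i j
    by_cases hij : i = j <;> simp [Matrix.diagonal, hij, Matrix.one_apply]
  rw [hdec, Matrix.star_eq_conjTranspose]
  refine Matrix.PosSemidef.mul_mul_conjTranspose_same ?_ U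
  refine Matrix.posSemidef_diagonal_iff.mpr fun i => ?_
  rw [show (1:ℂ) - (hρ.1.eigenvalues i : ℂ) = ((1 - hρ.1.eigenvalues i : ℝ) : ℂ) by push_cast; ring]
  rw [Complex.zero_le_real]
  linarith [hle i]

end Helpers

/-- If tr(C) = d for a quantum implementation in dimension d and every column of C
is nonzero, then every POVM element has rank one. -/
theorem povm_rank_one_of_trace_eq {d n : ℕ} (C : Matrix (Fin n) (Fin n) ℝ)
    (ρ : Fin n → Matrix (Fin d) (Fin d) ℂ) (M : Fin n → Matrix (Fin d) (Fin d) ℂ)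
    (h : QImpl C ρ M) (htr : C.trace = (d : ℝ))
    (hcol : ∀ b, ∃ a, C a b ≠ 0) :
    ∀ b, (M b).rank = 1 := by
  classical
  obtain ⟨hρP, hρtr, hMP, hMsum, hC⟩ := h
  have hterm : ∀ a ∈ Finset.univ, (0:ℂ) ≤ ((1 - ρ a) * M a).trace :=
    fun a _ => (trace_mul_psd_facts (one_sub_psd (hρP a) (hρtr a)) (hMP a)).1
  have hsum0 : ∑ a, ((1 - ρ a) * M a).trace = 0 := by
    have e1 : ∀ a : Fin n, ((1 - ρ a) * M a).trace = (M a).trace - (ρ a * M a).trace := by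
      intro a; rw [sub_mul, one_mul, Matrix.trace_sub]
    calc ∑ a, ((1 - ρ a) * M a).trace
        = ∑ a, ((M a).trace - (ρ a * M a).trace) := Finset.sum_congr rfl fun a _ => e1 a
      _ = (∑ a, (M a).trace) - ∑ a, (ρ a * M a).trace := Finset.sum_sub_distrib _ _
      _ = (d : ℂ) - (d : ℂ) := by
          congr 1
          · rw [← Matrix.trace_sum, hMsum, Matrix.trace_one]; simp
          · have hcast : ((C.trace : ℝ) : ℂ) = (d : ℂ) := by rw [htr]; push_cast; ring
            rw [Matrix.trace] at hcast
            push_cast at hcast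
            rw [← hcast]
            exact Finset.sum_congr rfl fun a _ => (hC a a).symm
      _ = 0 := sub_self _
  intro b
  have hzero : ((1 - ρ b) * M b).trace = 0 :=
    (Finset.sum_eq_zero_iff_of_nonneg hterm).mp hsum0 b (Finset.mem_univ b)
  have hprod : (1 - ρ b) * M b = 0 :=
    (trace_mul_psd_facts (one_sub_psd (hρP b) (hρtr b)) (hMP b)).2 hzero
  have hMρ : ρ b * M b = M b := by
    rw [sub_mul, one_mul, sub_eq_zero] at hprod; exact hprod.symm
  have hMρ' : M b * ρ b = M b := by
    have := congrArg Matrix.conjTranspose hMρ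
    rwa [Matrix.conjTranspose_mul, (hρP b).1.eq, (hMP b).1.eq] at this
  obtain ⟨a, ha⟩ := hcol b
  have hMne : M b ≠ 0 := by
    intro h0
    apply ha
    have hz : (C a b : ℂ) = 0 := by rw [hC a b, h0, mul_zero, Matrix.trace_zero]
    exact_mod_cast hz
  -- spectral decomposition of ρ b
  set hH := (hρP b).1 with hHdef
  set μ : Fin d → ℝ := hH.eigenvalues with hμdef
  set U : Matrix (Fin d) (Fin d) ℂ := (hH.eigenvectorUnitary : Matrix (Fin d) (Fin d) ℂ)
    with hUdef
  set D : Matrix (Fin d) (Fin d) ℂ := Matrix.diagonal (fun i => (μ i : ℂ)) with hDdef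
  have hρdec : ρ b = U * D * star U := hH.spectral_theorem
  have hUU : star U * U = 1 := Matrix.mem_unitaryGroup_iff'.mp hH.eigenvectorUnitary.2
  have hUU' : U * star U = 1 := Matrix.mem_unitaryGroup_iff.mp hH.eigenvectorUnitary.2
  have hc1 : ∀ X : Matrix (Fin d) (Fin d) ℂ, star U * (U * X) = X := fun X => by
    rw [← mul_assoc, hUU, one_mul]
  have hc2 : ∀ X : Matrix (Fin d) (Fin d) ℂ, U * (star U * X) = X := fun X => by
    rw [← mul_assoc, hUU', one_mul]
  set N : Matrix (Fin d) (Fin d) ℂ := star U * M b * U with hNdef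
  have hMN : M b = U * N * star U := by
    rw [hNdef]
    simp only [mul_assoc]
    rw [hUU', mul_one, hc2]
  have hN1 : N = D * N := by
    conv_lhs => rw [hNdef, ← hMρ, hρdec]
    rw [hNdef]
    simp only [mul_assoc]
    rw [hc1]
  have hN2 : N = N * D := by
    conv_lhs => rw [hNdef, ← hMρ', hρdec]
    rw [hNdef]
    simp only [mul_assoc]
    rw [hUU, mul_one]
  have hμnn : ∀ i, 0 ≤ μ i := fun i => (hρP b).eigenvalues_nonneg i
  have hμsum : ∑ i, μ i = 1 := density_eigen_sum (hρP b) (hρtr b)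
  have hentry : ∀ i j, N i j ≠ 0 → μ i = 1 ∧ μ j = 1 := by
    intro i j hne
    constructor
    · have h1 : N i j = (μ i : ℂ) * N i j := by
        conv_lhs => rw [hN1]
        rw [hDdef]; simp [Matrix.diagonal_mul]
      have h2 : ((μ i : ℂ) - 1) * N i j = 0 := by rw [sub_mul, one_mul, ← h1, sub_self]
      rcases mul_eq_zero.mp h2 with h3 | h3
      · have : (μ i : ℂ) = 1 := by linear_combination h3
        exact_mod_cast this
      · exact absurd h3 hne
    · have h1 : N i j = N i j * (μ j : ℂ) := by
        conv_lhs => rw [hN2]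
        rw [hDdef]; simp [Matrix.mul_diagonal]
      have h2 : N i j * ((μ j : ℂ) - 1) = 0 := by rw [mul_sub, mul_one, ← h1, sub_self]
      rcases mul_eq_zero.mp h2 with h3 | h3
      · exact absurd h3 hne
      · have : (μ j : ℂ) = 1 := by linear_combination h3
        exact_mod_cast this
  have hNdiag : N = Matrix.diagonal (fun i => N i i) := by
    ext i j
    by_cases hij : i = j
    · subst hij; simp
    · rw [Matrix.diagonal_apply_ne _ hij]
      by_contra hne
      obtain ⟨hi, hj⟩ := hentry i j hne
      exact hij (eig_one_unique hμnn hμsum hi hj)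
  have hsub : Subsingleton {i // N i i ≠ 0} := by
    constructor
    rintro ⟨i, hi⟩ ⟨j, hj⟩
    have hi1 := (hentry i i hi).1
    have hj1 := (hentry j j hj).1
    exact Subtype.ext (eig_one_unique hμnn hμsum hi1 hj1)
  have hne : Nonempty {i // N i i ≠ 0} := by
    by_contra hempty
    apply hMne
    rw [hMN]
    have hN0 : N = 0 := by
      rw [hNdiag]
      have : ∀ i, N i i = 0 := by
        intro i
        by_contra hi
        exact hempty ⟨⟨i, hi⟩⟩
      simp [this]
    rw [hN0, mul_zero, zero_mul]
  have hcard : Fintype.card {i // N i i ≠ 0} = 1 := by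
    have h1 : Fintype.card {i // N i i ≠ 0} ≤ 1 := Fintype.card_le_one_iff_subsingleton.mpr hsub
    have h2 : 0 < Fintype.card {i // N i i ≠ 0} := Fintype.card_pos_iff.mpr hne
    omega
  have hrankN : N.rank = 1 := by
    rw [hNdiag, Matrix.rank_diagonal]
    exact hcard
  have hle1 : (M b).rank ≤ N.rank := by
    rw [hMN]
    exact (Matrix.rank_mul_le_left _ _).trans (Matrix.rank_mul_le_right _ _)
  have hle2 : N.rank ≤ (M b).rank := by
    rw [hNdef]
    exact (Matrix.rank_mul_le_left _ _).trans (Matrix.rank_mul_le_right _ _)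
  omega
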